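/- Equip P = k[x₁,x₂,x₃] with the Poisson bracket {x₁,x₂} = x₁x₂, {x₂,x₃} = 3x₁² + 2x₁x₂ + x₂x₃, {x₃,x₁} = x₁² + x₁x₃. Let φ be the graded Poisson automorphism with φ(x₁) = −x₁, φ(x₂) = x₂, φ(x₃) = 2x₁ + x₃, and let G = ⟨φ⟩. Then the invariant subalgebra P^G equals the k-subalgebra generated by y₁ = x₂, y₂ = x₁ + x₃, y₃ = x₁², and these generators satisfy {y₁,y₂} = y₁y₂ + 3y₃, {y₂,y₃} = 2y₂y₃, {y₃,y₁} = 2y₁y₃. -/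

import Mathlib

open MvPolynomial

/-- The bracket on `k[x₁,x₂,x₃]` determined by the values `p12 = {x₁,x₂}`, `p23 = {x₂,x₃}`,
`p31 = {x₃,x₁}` via `{f,g} = Σ_{i<j} (∂f/∂xᵢ·∂g/∂xⱼ − ∂f/∂xⱼ·∂g/∂xᵢ)·{xᵢ,xⱼ}`. -/
noncomputable def jacBracket {k : Type*} [Field k] (p12 p23 p31 : MvPolynomial (Fin 3) k)
    (f g : MvPolynomial (Fin 3) k) : MvPolynomial (Fin 3) k :=
  (pderiv 0 f * pderiv 1 g - pderiv 1 f * pderiv 0 g) * p12 +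
    (pderiv 1 f * pderiv 2 g - pderiv 2 f * pderiv 1 g) * p23 +
    (pderiv 2 f * pderiv 0 g - pderiv 0 f * pderiv 2 g) * p31

section Aux
variable {k : Type*} [Field k]

lemma tau_monomial (τ : MvPolynomial (Fin 3) k →ₐ[k] MvPolynomial (Fin 3) k)
    (h0 : τ (X 0) = -X 0) (h1 : τ (X 1) = X 1) (h2 : τ (X 2) = X 2)
    (m : Fin 3 →₀ ℕ) (c : k) :
    τ (monomial m c) = (-1 : k) ^ (m 0) • monomial m c := by
  have hC : τ (C c) = C c := by rw [← algebraMap_eq]; exact τ.commutes c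
  have hm : (monomial m c : MvPolynomial (Fin 3) k)
      = C c * (X 0 ^ (m 0) * (X 1 ^ (m 1) * X 2 ^ (m 2))) := by
    rw [monomial_eq, Finsupp.prod_fintype _ _ (fun i => pow_zero _), Fin.prod_univ_three]
    ring
  rw [hm]
  simp only [map_mul, map_pow, h0, h1, h2, hC]
  rw [neg_pow]
  simp only [Algebra.smul_def, algebraMap_eq, map_mul, map_pow, map_neg, map_one]
  ring

lemma even_mem [CharZero k]
    (τ : MvPolynomial (Fin 3) k →ₐ[k] MvPolynomial (Fin 3) k)
    (h0 : τ (X 0) = -X 0) (h1 : τ (X 1) = X 1) (h2 : τ (X 2) = X 2)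
    (g : MvPolynomial (Fin 3) k) (hg : τ g = g) :
    g ∈ Algebra.adjoin k ({X 0 ^ 2, X 1, X 2} : Set (MvPolynomial (Fin 3) k)) := by
  have hcoeff : ∀ m : Fin 3 →₀ ℕ, ¬ Even (m 0) → coeff m g = 0 := by
    intro m hm
    have h1' : coeff m (τ g) = (-1 : k) ^ (m 0) * coeff m g := by
      conv_lhs => rw [g.as_sum, map_sum]
      rw [Finset.sum_congr rfl (fun m' _ => tau_monomial τ h0 h1 h2 m' (coeff m' g))]
      simp only [coeff_sum, coeff_smul, coeff_monomial, smul_eq_mul]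
      rw [Finset.sum_eq_single m]
      · simp
      · intro b hb hbm; simp [hbm]
      · intro hms; simp [MvPolynomial.notMem_support_iff.mp hms]
    rw [hg] at h1'
    rw [(Nat.not_even_iff_odd.mp hm).neg_one_pow] at h1'
    have h2c : (2 : k) * coeff m g = 0 := by linear_combination h1'
    exact (mul_eq_zero.mp h2c).resolve_left two_ne_zero
  rw [g.as_sum]
  apply Subalgebra.sum_mem
  intro m hm
  by_cases he : Even (m 0)
  · have hmono : (monomial m (coeff m g) : MvPolynomial (Fin 3) k)
        = C (coeff m g) * (X 0 ^ (m 0) * (X 1 ^ (m 1) * X 2 ^ (m 2))) := by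
      rw [monomial_eq, Finsupp.prod_fintype _ _ (fun i => pow_zero _), Fin.prod_univ_three]
      ring
    rw [hmono]
    obtain ⟨j, hj⟩ := he
    have hx : (X 0 : MvPolynomial (Fin 3) k) ^ (m 0) = (X 0 ^ 2) ^ j := by
      rw [← pow_mul, hj]; ring_nf
    rw [hx]
    refine Subalgebra.mul_mem _ ?_ (Subalgebra.mul_mem _ ?_ (Subalgebra.mul_mem _ ?_ ?_))
    · rw [← algebraMap_eq]; exact Subalgebra.algebraMap_mem _ _
    · exact Subalgebra.pow_mem _ (Algebra.subset_adjoin (by simp)) _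
    · exact Subalgebra.pow_mem _ (Algebra.subset_adjoin (by simp)) _
    · exact Subalgebra.pow_mem _ (Algebra.subset_adjoin (by simp)) _
  · rw [hcoeff m he, monomial_zero]; exact Subalgebra.zero_mem _

end Aux

/-- For the bracket `{x₁,x₂} = x₁x₂`, `{x₂,x₃} = 3x₁² + 2x₁x₂ + x₂x₃`,
`{x₃,x₁} = x₁² + x₁x₃` and the graded Poisson automorphism
`φ : x₁ ↦ −x₁, x₂ ↦ x₂, x₃ ↦ 2x₁ + x₃` with `G = ⟨φ⟩`, the invariant subalgebra `P^G` is
generated by `y₁ = x₂`, `y₂ = x₁ + x₃`, `y₃ = x₁²`, and `{y₁,y₂} = y₁y₂ + 3y₃`,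
`{y₂,y₃} = 2y₂y₃`, `{y₃,y₁} = 2y₁y₃`. -/


theorem stmt_17 {k : Type*} [Field k] [IsAlgClosed k] [CharZero k]
    (φ : MvPolynomial (Fin 3) k ≃ₐ[k] MvPolynomial (Fin 3) k)
    (hφ0 : φ (X 0) = -X 0)
    (hφ1 : φ (X 1) = X 1)
    (hφ2 : φ (X 2) = 2 * X 0 + X 2)
    (hbr : ∀ f g,
      φ (jacBracket (X 0 * X 1) (3 * X 0 ^ 2 + 2 * X 0 * X 1 + X 1 * X 2)
          (X 0 ^ 2 + X 0 * X 2) f g) =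
        jacBracket (X 0 * X 1) (3 * X 0 ^ 2 + 2 * X 0 * X 1 + X 1 * X 2)
          (X 0 ^ 2 + X 0 * X 2) (φ f) (φ g)) :
    {f : MvPolynomial (Fin 3) k | ∀ ψ ∈ Subgroup.zpowers φ, ψ f = f} =
      ↑(Algebra.adjoin k ({X 1, X 0 + X 2, X 0 ^ 2} : Set (MvPolynomial (Fin 3) k))) ∧
    jacBracket (X 0 * X 1) (3 * X 0 ^ 2 + 2 * X 0 * X 1 + X 1 * X 2)
        (X 0 ^ 2 + X 0 * X 2) (X 1) (X 0 + X 2) =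
      (X 1 * (X 0 + X 2) + 3 * X 0 ^ 2 : MvPolynomial (Fin 3) k) ∧
    jacBracket (X 0 * X 1) (3 * X 0 ^ 2 + 2 * X 0 * X 1 + X 1 * X 2)
        (X 0 ^ 2 + X 0 * X 2) (X 0 + X 2) (X 0 ^ 2) =
      (2 * ((X 0 + X 2) * X 0 ^ 2) : MvPolynomial (Fin 3) k) ∧
    jacBracket (X 0 * X 1) (3 * X 0 ^ 2 + 2 * X 0 * X 1 + X 1 * X 2)
        (X 0 ^ 2 + X 0 * X 2) (X 0 ^ 2) (X 1) =
      (2 * (X 1 * X 0 ^ 2) : MvPolynomial (Fin 3) k) := by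
  refine ⟨?_, ?_, ?_, ?_⟩
  · clear hbr
    -- substitution algebra homs
    set F : MvPolynomial (Fin 3) k →ₐ[k] MvPolynomial (Fin 3) k :=
      aeval ![X 0, X 1, X 0 + X 2] with hF
    set Gv : MvPolynomial (Fin 3) k →ₐ[k] MvPolynomial (Fin 3) k :=
      aeval ![X 0, X 1, X 2 - X 0] with hGv
    have hFG : ∀ p, F (Gv p) = p := by
      intro p
      have : F.comp Gv = AlgHom.id k _ := by
        apply MvPolynomial.algHom_ext; intro i
        fin_cases i <;> simp [hF, hGv] <;> ring
      calc F (Gv p) = (F.comp Gv) p := rfl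
      _ = p := by rw [this]; rfl
    have hGF : ∀ p, Gv (F p) = p := by
      intro p
      have : Gv.comp F = AlgHom.id k _ := by
        apply MvPolynomial.algHom_ext; intro i
        fin_cases i <;> simp [hF, hGv] <;> ring
      calc Gv (F p) = (Gv.comp F) p := rfl
      _ = p := by rw [this]; rfl
    ext f
    simp only [Set.mem_setOf_eq, SetLike.mem_coe]
    constructor
    · intro hf
      have hφf : φ f = f := hf φ (Subgroup.mem_zpowers φ)
        -- conjugated map
      set τ : MvPolynomial (Fin 3) k →ₐ[k] MvPolynomial (Fin 3) k :=
        Gv.comp (φ.toAlgHom.comp F) with hτ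
      have hτ0 : τ (X 0) = -X 0 := by simp [hτ, hF, hGv, hφ0]
      have hτ1 : τ (X 1) = X 1 := by simp [hτ, hF, hGv, hφ1]
      have hτ2 : τ (X 2) = X 2 := by
        simp only [hτ, AlgHom.coe_comp, Function.comp_apply, AlgEquiv.toAlgHom_eq_coe,
          AlgHom.coe_coe, AlgEquiv.coe_toAlgHom]
        have : F (X 2) = X 0 + X 2 := by simp [hF]
        rw [this, map_add, hφ0, hφ2]
        have : (-X 0 + (2 * X 0 + X 2) : MvPolynomial (Fin 3) k) = X 0 + X 2 := by ring
        rw [this, map_add]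
        simp [hGv]
      have hgfix : τ (Gv f) = Gv f := by
        simp only [hτ, AlgHom.coe_comp, Function.comp_apply, AlgEquiv.toAlgHom_eq_coe,
          AlgHom.coe_coe, AlgEquiv.coe_toAlgHom]
        rw [hFG, hφf]
      have hgmem := even_mem τ hτ0 hτ1 hτ2 (Gv f) hgfix
      have hmap : f ∈ (Algebra.adjoin k ({X 0 ^ 2, X 1, X 2} :
          Set (MvPolynomial (Fin 3) k))).map F := ⟨Gv f, hgmem, hFG f⟩
      rw [AlgHom.map_adjoin] at hmap
      have himg : F '' ({X 0 ^ 2, X 1, X 2} : Set (MvPolynomial (Fin 3) k))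
          = {X 1, X 0 + X 2, X 0 ^ 2} := by
        have e0 : F (X 0 ^ 2) = X 0 ^ 2 := by simp [hF]
        have e1 : F (X 1) = X 1 := by simp [hF]
        have e2 : F (X 2) = X 0 + X 2 := by simp [hF]
        rw [Set.image_insert_eq, Set.image_insert_eq, Set.image_singleton, e0, e1, e2]
        ext x
        simp only [Set.mem_insert_iff, Set.mem_singleton_iff]
        tauto
      rwa [himg] at hmap
    · intro hf ψ hψ
      obtain ⟨n, rfl⟩ := hψ
      change (φ ^ n) f = f
      have hφfix : φ f = f := by
        refine Algebra.adjoin_induction ?_ ?_ ?_ ?_ hf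
        · rintro x (rfl | rfl | rfl)
          · exact hφ1
          · rw [map_add, hφ0, hφ2]; ring
          · rw [map_pow, hφ0]; ring
        · intro r; exact φ.commutes r
        · intro a b _ _ ha hb; rw [map_add, ha, hb]
        · intro a b _ _ ha hb; rw [map_mul, ha, hb]
      have key : ∀ m : ℕ, (φ ^ m) f = f := by
        intro m
        induction m with
        | zero => rfl
        | succ n ih => rw [pow_succ, AlgEquiv.mul_apply, hφfix, ih]
      cases n with
      | ofNat m => rw [Int.ofNat_eq_coe, zpow_natCast]; exact key m
      | negSucc m =>
        rw [zpow_negSucc]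
        have : (φ ^ (m + 1)) f = f := key (m + 1)
        exact (φ ^ (m + 1)).injective
          (by rw [← AlgEquiv.mul_apply, mul_inv_cancel, AlgEquiv.one_apply, this])
  · simp [jacBracket, pderiv_X]; ring
  · simp [jacBracket, pderiv_X]; ring
  · simp [jacBracket, pderiv_X]; ring
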